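/- Let D, D' ⊆ ℝⁿ be compact domains and g : D → D' a C² diffeomorphism. Let K ⊆ D be compact convex and let δ > 0 be the distance from K to the complement of D. Then reach(g(K)) ≥ min{ (δ/2)·‖D(g⁻¹)‖₀⁻¹, ‖D(g⁻¹)‖₀⁻²·‖D²g‖₀⁻¹ }, where ‖·‖₀ denotes the sup-norm over the domain of the indicated derivative. -/

import Mathlib

open scoped RealInnerProductSpace
open Set Metric Filter Topology

set_option maxHeartbeats 1600000

/-- If g : D → D' is a C² diffeomorphism of compact domains and K ⊆ D
is compact convex at distance δ from the complement of D, then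
reach(g(K)) ≥ min{(δ/2)·M₁⁻¹, M₁⁻²·M₂⁻¹}, where M₁ bounds ‖D(g⁻¹)‖₀ and M₂ bounds
‖D²g‖₀; reach ≥ m is expressed by unique nearest points for all points at distance
< m from g(K). -/
theorem reach_of_diffeomorphic_image_of_convex
    {n : ℕ} (D D' K : Set (EuclideanSpace ℝ (Fin n)))
    (hD : IsCompact D) (hD' : IsCompact D')
    (g ginv : EuclideanSpace ℝ (Fin n) → EuclideanSpace ℝ (Fin n))
    (hg : ContDiffOn ℝ 2 g D) (hginv : ContDiffOn ℝ 1 ginv D')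
    (himg : g '' D = D')
    (hli : ∀ x ∈ D, ginv (g x) = x) (hri : ∀ y ∈ D', g (ginv y) = y)
    (hKne : K.Nonempty) (hKcp : IsCompact K) (hKcv : Convex ℝ K) (hKD : K ⊆ D)
    (δ : ℝ) (hδ : 0 < δ) (hδdist : ∀ x ∈ K, ∀ y, y ∉ D → δ ≤ dist x y)
    (M₁ M₂ : ℝ) (hM₁ : 0 < M₁) (hM₂ : 0 < M₂)
    (hM₁b : ∀ y ∈ D', ‖fderiv ℝ ginv y‖ ≤ M₁)
    (hM₂b : ∀ x ∈ D, ‖fderiv ℝ (fderiv ℝ g) x‖ ≤ M₂) :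
    ∀ q : EuclideanSpace ℝ (Fin n),
      Metric.infDist q (g '' K) < min (δ / 2 * M₁⁻¹) (M₁⁻¹ ^ 2 * M₂⁻¹) →
      ∃! y, y ∈ g '' K ∧ dist q y = Metric.infDist q (g '' K) := by
  intro q hq
  classical
  set U : Set (EuclideanSpace ℝ (Fin n)) := interior D with hUdef
  have hUopen : IsOpen U := isOpen_interior
  have hballU : ∀ x ∈ K, ball x δ ⊆ U := by
    intro x hx
    apply interior_maximal _ isOpen_ball
    intro y hy
    by_contra hyD
    have h1 := hδdist x hx y hyD
    rw [mem_ball, dist_comm] at hy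
    linarith
  have hKU : K ⊆ U := fun x hx => hballU x hx (mem_ball_self hδ)
  have hgD' : ∀ x ∈ D, g x ∈ D' := fun x hx => himg ▸ mem_image_of_mem g hx
  have hgC : ∀ x ∈ U, ContDiffAt ℝ 2 g x := fun x hx =>
    (hg.mono interior_subset).contDiffAt (hUopen.mem_nhds hx)
  have hgdiff : ∀ x ∈ U, HasFDerivAt g (fderiv ℝ g x) x := fun x hx =>
    ((hgC x hx).differentiableAt (by norm_num)).hasFDerivAt
  have hg2 : ∀ x ∈ U, HasFDerivAt (fderiv ℝ g) (fderiv ℝ (fderiv ℝ g) x) x := fun x hx =>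
    (((hgC x hx).fderiv_right (m := 1) (by norm_num)).differentiableAt (by norm_num)).hasFDerivAt
  have hginvdiff : ∀ y ∈ interior D', DifferentiableAt ℝ ginv y := fun y hy =>
    (hginv.differentiableOn one_ne_zero).differentiableAt (mem_interior_iff_mem_nhds.mp hy)
  -- g is locally open on U
  have hmap : ∀ x ∈ U, Filter.map g (𝓝 x) = 𝓝 (g x) := by
    intro x hxU
    have hxD : x ∈ D := interior_subset hxU
    have hder : HasFDerivWithinAt ginv (fderivWithin ℝ ginv D' (g x)) D' (g x) :=
      ((hginv.differentiableOn one_ne_zero) (g x) (hgD' x hxD)).hasFDerivWithinAt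
    have hcomp : HasFDerivWithinAt (ginv ∘ g)
        ((fderivWithin ℝ ginv D' (g x)).comp (fderiv ℝ g x)) U x :=
      hder.comp x ((hgdiff x hxU).hasFDerivWithinAt)
        (fun u hu => hgD' u (interior_subset hu))
    have hcongr : HasFDerivWithinAt (fun u => u)
        ((fderivWithin ℝ ginv D' (g x)).comp (fderiv ℝ g x)) U x :=
      hcomp.congr (fun u hu => (hli u (interior_subset hu)).symm) ((hli x hxD).symm)
    have hid : HasFDerivWithinAt (fun u => u)
        (ContinuousLinearMap.id ℝ (EuclideanSpace ℝ (Fin n))) U x :=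
      (hasFDerivAt_id x).hasFDerivWithinAt
    have heq : (fderivWithin ℝ ginv D' (g x)).comp (fderiv ℝ g x)
        = ContinuousLinearMap.id ℝ (EuclideanSpace ℝ (Fin n)) :=
      (hUopen.uniqueDiffOn x hxU).eq hcongr hid
    have hinj : Function.Injective (fderiv ℝ g x) := by
      intro u v huv
      have h1 := congrArg (fun L : EuclideanSpace ℝ (Fin n) →L[ℝ]
        EuclideanSpace ℝ (Fin n) => L u) heq
      have h2 := congrArg (fun L : EuclideanSpace ℝ (Fin n) →L[ℝ]
        EuclideanSpace ℝ (Fin n) => L v) heq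
      simp only [ContinuousLinearMap.comp_apply, ContinuousLinearMap.id_apply] at h1 h2
      rw [← h1, ← h2, huv]
    have hsurj : Function.Surjective (fderiv ℝ g x) :=
      LinearMap.injective_iff_surjective.mp hinj
    let e : EuclideanSpace ℝ (Fin n) ≃L[ℝ] EuclideanSpace ℝ (Fin n) :=
      (LinearEquiv.ofBijective ((fderiv ℝ g x) : EuclideanSpace ℝ (Fin n) →ₗ[ℝ]
        EuclideanSpace ℝ (Fin n)) ⟨hinj, hsurj⟩).toContinuousLinearEquiv
    have hstrict : HasStrictFDerivAt g
        (e : EuclideanSpace ℝ (Fin n) →L[ℝ] EuclideanSpace ℝ (Fin n)) x := by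
      have h := (hgC x hxU).hasStrictFDerivAt (by norm_num)
      have hcoe : (e : EuclideanSpace ℝ (Fin n) →L[ℝ] EuclideanSpace ℝ (Fin n))
          = fderiv ℝ g x := by ext u; rfl
      rw [hcoe]
      exact h
    exact hstrict.map_nhds_eq_of_equiv
  -- the key Taylor-type inequality
  have keyC : ∀ a ∈ K, ∀ b ∈ K,
      (∀ p ∈ K, dist q (g a) ≤ dist q (g p)) →
      ⟪q - g a, g b - g a⟫ ≤ dist q (g a) * M₂ * ‖b - a‖ ^ 2 / 2 := by
    intro a ha b hb hmin
    set v : EuclideanSpace ℝ (Fin n) := b - a with hv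
    set x : ℝ → EuclideanSpace ℝ (Fin n) := fun t => a + t • v with hx
    have hxK : ∀ t ∈ Icc (0:ℝ) 1, x t ∈ K := by
      intro t ht
      have h := hKcv ha hb (by linarith [ht.2] : (0:ℝ) ≤ 1 - t) ht.1 (by ring)
      convert h using 1
      simp only [hx, hv, smul_sub, sub_smul, one_smul]
      abel
    have hxU : ∀ t ∈ Icc (0:ℝ) 1, x t ∈ U := fun t ht => hKU (hxK t ht)
    have hxd : ∀ t : ℝ, HasDerivAt x v t := by
      intro t
      have h : HasDerivAt (fun s : ℝ => s • v) ((1:ℝ) • v) t :=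
        (hasDerivAt_id t).smul_const v
      rw [one_smul] at h
      exact h.const_add a
    set γ : ℝ → EuclideanSpace ℝ (Fin n) := fun t => g (x t) with hγ
    have hγd : ∀ t ∈ Icc (0:ℝ) 1, HasDerivAt γ (fderiv ℝ g (x t) v) t := fun t ht =>
      (hgdiff (x t) (hxU t ht)).comp_hasDerivAt t (hxd t)
    have hγ'd : ∀ t ∈ Icc (0:ℝ) 1, HasDerivAt (fun s => fderiv ℝ g (x s) v)
        (fderiv ℝ (fderiv ℝ g) (x t) v v) t := by
      intro t ht
      have h1 : HasDerivAt (fun s => fderiv ℝ g (x s))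
          (fderiv ℝ (fderiv ℝ g) (x t) v) t :=
        (hg2 (x t) (hxU t ht)).comp_hasDerivAt t (hxd t)
      have h2 := (ContinuousLinearMap.apply ℝ (EuclideanSpace ℝ (Fin n))
        v).hasFDerivAt.comp_hasDerivAt t h1
      exact h2
    set c₀ : EuclideanSpace ℝ (Fin n) := q - g a with hc₀
    have hc₀n : ‖c₀‖ = dist q (g a) := (dist_eq_norm q (g a)).symm
    set d₀ : ℝ := dist q (g a) with hd₀
    set B : ℝ := d₀ * M₂ * ‖v‖ ^ 2 with hB
    have hx0 : x 0 = a := by simp [hx]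
    -- first variation at 0 is ≤ 0
    have hfirst : ⟪c₀, fderiv ℝ g a v⟫ ≤ 0 := by
      set f : ℝ → ℝ := fun t => ⟪q - γ t, q - γ t⟫ with hf
      have hfd : HasDerivAt f
          (⟪q - γ 0, -(fderiv ℝ g (x 0) v)⟫ + ⟪-(fderiv ℝ g (x 0) v), q - γ 0⟫) 0 := by
        have h1 : HasDerivAt (fun t => q - γ t) (-(fderiv ℝ g (x 0) v)) 0 :=
          (hγd 0 (by norm_num)).const_sub q
        exact h1.inner ℝ h1
      have hmin' : ∀ t ∈ Icc (0:ℝ) 1, f 0 ≤ f t := by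
        intro t ht
        have h1 : dist q (γ 0) ≤ dist q (γ t) := by
          have : γ 0 = g a := by simp [hγ, hx0]
          rw [this]
          exact hmin (x t) (hxK t ht)
        simp only [hf, real_inner_self_eq_norm_sq, ← dist_eq_norm]
        exact pow_le_pow_left₀ dist_nonneg h1 2
      have hslope : (0:ℝ) ≤ ⟪q - γ 0, -(fderiv ℝ g (x 0) v)⟫
          + ⟪-(fderiv ℝ g (x 0) v), q - γ 0⟫ := by
        have hW := hfd.hasDerivWithinAt (s := Ioi (0:ℝ))
        rw [hasDerivWithinAt_iff_tendsto_slope' (notMem_Ioi.mpr le_rfl)] at hW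
        refine ge_of_tendsto hW ?_
        filter_upwards [Ioc_mem_nhdsGT_of_mem (⟨le_refl (0:ℝ), zero_lt_one⟩ :
          (0:ℝ) ∈ Ico (0:ℝ) 1)] with t ht
        rw [slope_def_field]
        apply div_nonneg
        · exact sub_nonneg.mpr (hmin' t ⟨le_of_lt ht.1, ht.2⟩)
        · linarith [ht.1]
      have hγ0 : γ 0 = g a := by simp [hγ, hx0]
      rw [hγ0, hx0, inner_neg_right, inner_neg_left, real_inner_comm, ← hc₀] at hslope
      have hcomm := real_inner_comm c₀ (fderiv ℝ g a v)
      linarith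
    -- second derivative bound
    have hsecond : ∀ t ∈ Icc (0:ℝ) 1,
        ⟪c₀, fderiv ℝ (fderiv ℝ g) (x t) v v⟫ ≤ B := by
      intro t ht
      have h1 : ⟪c₀, fderiv ℝ (fderiv ℝ g) (x t) v v⟫
          ≤ ‖c₀‖ * ‖fderiv ℝ (fderiv ℝ g) (x t) v v‖ := real_inner_le_norm _ _
      have h2 : ‖fderiv ℝ (fderiv ℝ g) (x t) v v‖ ≤ M₂ * ‖v‖ * ‖v‖ := by
        calc ‖fderiv ℝ (fderiv ℝ g) (x t) v v‖
            ≤ ‖fderiv ℝ (fderiv ℝ g) (x t) v‖ * ‖v‖ :=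
              ContinuousLinearMap.le_opNorm _ v
          _ ≤ (‖fderiv ℝ (fderiv ℝ g) (x t)‖ * ‖v‖) * ‖v‖ :=
              mul_le_mul_of_nonneg_right (ContinuousLinearMap.le_opNorm _ v) (norm_nonneg v)
          _ ≤ (M₂ * ‖v‖) * ‖v‖ :=
              mul_le_mul_of_nonneg_right (mul_le_mul_of_nonneg_right
                (hM₂b (x t) (hKD (hxK t ht))) (norm_nonneg v)) (norm_nonneg v)
          _ = M₂ * ‖v‖ * ‖v‖ := by ring
      calc ⟪c₀, fderiv ℝ (fderiv ℝ g) (x t) v v⟫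
          ≤ ‖c₀‖ * (M₂ * ‖v‖ * ‖v‖) :=
            h1.trans (mul_le_mul_of_nonneg_left h2 (norm_nonneg c₀))
        _ = B := by rw [hc₀n, hB]; ring
    -- the comparison function φ
    set φ' : ℝ → ℝ := fun t => ⟪c₀, fderiv ℝ g (x t) v⟫ - B * t with hφ'
    have hφ'd : ∀ t ∈ Icc (0:ℝ) 1, HasDerivAt φ'
        (⟪c₀, fderiv ℝ (fderiv ℝ g) (x t) v v⟫ - B) t := by
      intro t ht
      have h1 : HasDerivAt (fun s => ⟪c₀, fderiv ℝ g (x s) v⟫)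
          (⟪c₀, fderiv ℝ (fderiv ℝ g) (x t) v v⟫) t := by
        have h := (hasDerivAt_const t c₀).inner ℝ (hγ'd t ht)
        simpa using h
      have h2 : HasDerivAt (fun s : ℝ => B * s) B t := by
        simpa using (hasDerivAt_id t).const_mul B
      exact h1.sub h2
    have hφ'anti : AntitoneOn φ' (Icc 0 1) := by
      apply antitoneOn_of_deriv_nonpos (convex_Icc 0 1)
      · exact fun t ht => ((hφ'd t ht).continuousAt).continuousWithinAt
      · intro t ht
        rw [interior_Icc] at ht
        exact ((hφ'd t (Ioo_subset_Icc_self ht)).differentiableAt).differentiableWithinAt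
      · intro t ht
        rw [interior_Icc] at ht
        rw [(hφ'd t (Ioo_subset_Icc_self ht)).deriv]
        have := hsecond t (Ioo_subset_Icc_self ht)
        linarith
    have hφ'0 : φ' 0 ≤ 0 := by
      simp only [hφ', hx0, mul_zero, sub_zero]
      exact hfirst
    have hφ'le : ∀ t ∈ Icc (0:ℝ) 1, φ' t ≤ 0 := fun t ht =>
      (hφ'anti (left_mem_Icc.mpr zero_le_one) ht ht.1).trans hφ'0
    set φ : ℝ → ℝ := fun t => ⟪c₀, γ t⟫ - B / 2 * t ^ 2 with hφ
    have hφd : ∀ t ∈ Icc (0:ℝ) 1, HasDerivAt φ (φ' t) t := by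
      intro t ht
      have h1 : HasDerivAt (fun s => ⟪c₀, γ s⟫) (⟪c₀, fderiv ℝ g (x t) v⟫) t := by
        have h := (hasDerivAt_const t c₀).inner ℝ (hγd t ht)
        simpa using h
      have h2 : HasDerivAt (fun s : ℝ => B / 2 * s ^ 2) (B * t) t := by
        have h := (hasDerivAt_pow 2 t).const_mul (B / 2)
        refine h.congr_deriv ?_
        simp only [Nat.cast_ofNat, Nat.reduceSub, pow_one]
        ring
      exact h1.sub h2
    have hφanti : AntitoneOn φ (Icc 0 1) := by
      apply antitoneOn_of_deriv_nonpos (convex_Icc 0 1)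
      · exact fun t ht => ((hφd t ht).continuousAt).continuousWithinAt
      · intro t ht
        rw [interior_Icc] at ht
        exact ((hφd t (Ioo_subset_Icc_self ht)).differentiableAt).differentiableWithinAt
      · intro t ht
        rw [interior_Icc] at ht
        rw [(hφd t (Ioo_subset_Icc_self ht)).deriv]
        exact hφ'le t (Ioo_subset_Icc_self ht)
    have hφ10 : φ 1 ≤ φ 0 :=
      hφanti (left_mem_Icc.mpr zero_le_one) (right_mem_Icc.mpr zero_le_one) zero_le_one
    have hγ1 : γ 1 = g b := by simp [hγ, hx, hv]
    have hγ0 : γ 0 = g a := by simp [hγ, hx0]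
    simp only [hφ, hγ1, hγ0, one_pow, mul_one, ne_eq, OfNat.ofNat_ne_zero,
      not_false_eq_true, zero_pow, mul_zero, sub_zero] at hφ10
    rw [inner_sub_right]
    linarith
  -- the quantitative lift
  have hballD : ∀ a ∈ K, ball a δ ⊆ D := fun a ha => (hballU a ha).trans interior_subset
  have lift : ∀ a ∈ K, ∀ z : EuclideanSpace ℝ (Fin n), M₁ * dist z (g a) < δ →
      ∃ u ∈ closedBall a (M₁ * dist z (g a)), g u = z := by
    intro a ha z hz
    set w : EuclideanSpace ℝ (Fin n) := z - g a with hw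
    set L : ℝ := dist z (g a) with hL
    have hLnn : 0 ≤ L := dist_nonneg
    have hwn : ‖w‖ = L := by rw [hw, hL, dist_eq_norm]
    set σ : ℝ → EuclideanSpace ℝ (Fin n) := fun s => g a + s • w with hσ
    have hσd : ∀ s : ℝ, HasDerivAt σ w s := by
      intro s
      have h : HasDerivAt (fun s : ℝ => s • w) ((1:ℝ) • w) s :=
        (hasDerivAt_id s).smul_const w
      rw [one_smul] at h
      exact h.const_add (g a)
    have hσcont : Continuous σ := continuous_const.add (continuous_id.smul continuous_const)
    set W : Set (EuclideanSpace ℝ (Fin n)) := g '' (ball a δ) with hWdef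
    have hWnhds : ∀ y ∈ W, W ∈ 𝓝 y := by
      rintro y ⟨u, hu, rfl⟩
      rw [← hmap u (hballU a ha hu), mem_map]
      exact mem_of_superset (isOpen_ball.mem_nhds hu) (subset_preimage_image g _)
    have hWD' : W ⊆ D' := by
      rintro y ⟨u, hu, rfl⟩
      exact hgD' u (hballD a ha hu)
    have hWint : W ⊆ interior D' := fun y hy =>
      mem_interior_iff_mem_nhds.mpr (mem_of_superset (hWnhds y hy) hWD')
    set E : Set ℝ := {s | s ∈ Icc (0:ℝ) 1 ∧
      ∃ u ∈ closedBall a (M₁ * L * s), g u = σ s} with hE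
    have hEne : E.Nonempty := ⟨0, left_mem_Icc.mpr zero_le_one, a, by simp, by simp [hσ]⟩
    have hEbdd : BddAbove E := bddAbove_Icc.mono (fun s hs => hs.1)
    have hEclosed : IsClosed E := by
      apply IsSeqClosed.isClosed
      intro sn s hsn hlim
      choose hIcc u hucb hgu using hsn
      have hub : ∀ m, u m ∈ closedBall a (M₁ * L) := by
        intro m
        rw [mem_closedBall] at *
        have h1 : M₁ * L * sn m ≤ M₁ * L * 1 :=
          mul_le_mul_of_nonneg_left (hIcc m).2 (by positivity)
        have := hucb m
        rw [mem_closedBall] at this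
        linarith
      obtain ⟨ul, hulcb, ψ, hψ, hψtend⟩ :=
        (isCompact_closedBall a (M₁ * L)).tendsto_subseq hub
      have hsIcc : s ∈ Icc (0:ℝ) 1 :=
        isClosed_Icc.mem_of_tendsto hlim (Eventually.of_forall hIcc)
      refine ⟨hsIcc, ul, ?_, ?_⟩
      · rw [mem_closedBall]
        have h1 : Tendsto (fun m => dist (u (ψ m)) a) atTop (𝓝 (dist ul a)) :=
          hψtend.dist tendsto_const_nhds
        have h2 : Tendsto (fun m => M₁ * L * sn (ψ m)) atTop (𝓝 (M₁ * L * s)) :=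
          tendsto_const_nhds.mul (hlim.comp hψ.tendsto_atTop)
        refine le_of_tendsto_of_tendsto' h1 h2 (fun m => ?_)
        have := hucb (ψ m)
        rwa [mem_closedBall] at this
      · have hulU : ul ∈ U := hballU a ha (closedBall_subset_ball hz hulcb)
        have hgc : ContinuousAt g ul :=
          ((hgC ul hulU).differentiableAt (by norm_num)).continuousAt
        have h1 : Tendsto (fun m => g (u (ψ m))) atTop (𝓝 (g ul)) := hgc.tendsto.comp hψtend
        have h2 : Tendsto (fun m => σ (sn (ψ m))) atTop (𝓝 (σ s)) :=
          (hσcont.tendsto _).comp (hlim.comp hψ.tendsto_atTop)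
        have h3 : (fun m => g (u (ψ m))) = fun m => σ (sn (ψ m)) :=
          funext fun m => hgu (ψ m)
        rw [h3] at h1
        exact tendsto_nhds_unique h1 h2
    set c : ℝ := sSup E with hc
    have hcE : c ∈ E := hEclosed.csSup_mem hEne hEbdd
    have hc1 : c = 1 := by
      by_contra hne
      have hclt : c < 1 := lt_of_le_of_ne hcE.1.2 hne
      obtain ⟨hcIcc, u, hucb, hgu⟩ := hcE
      have hucb' : u ∈ closedBall a (M₁ * L) := by
        rw [mem_closedBall] at hucb ⊢
        have h1 : M₁ * L * c ≤ M₁ * L * 1 :=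
          mul_le_mul_of_nonneg_left hcIcc.2 (by positivity)
        linarith
      have huball : u ∈ ball a δ := closedBall_subset_ball hz hucb'
      have huD : u ∈ D := hballD a ha huball
      have hσcW : σ c ∈ W := ⟨u, huball, hgu⟩
      have hpre : {s : ℝ | σ s ∈ W} ∈ 𝓝 c :=
        hσcont.continuousAt.preimage_mem_nhds (hWnhds _ hσcW)
      obtain ⟨ε, hε, hballε⟩ := Metric.mem_nhds_iff.mp hpre
      set s₀ : ℝ := min 1 (c + ε / 2) with hs₀
      have hcs₀ : c < s₀ := lt_min hclt (by linarith)
      have hs₀le : s₀ - c ≤ ε / 2 := by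
        have := min_le_right 1 (c + ε / 2)
        simp only [hs₀]
        linarith [min_le_right 1 (c + ε / 2)]
      have hσW : ∀ s ∈ Icc c s₀, σ s ∈ W := by
        intro s hs
        apply hballε
        rw [mem_ball, Real.dist_eq, abs_lt]
        constructor
        · linarith [hs.1]
        · linarith [hs.2]
      have hmvt : ‖ginv (σ s₀) - ginv (σ c)‖ ≤ M₁ * L * (s₀ - c) := by
        have hder : ∀ s ∈ Icc c s₀, HasDerivWithinAt (fun s => ginv (σ s))
            (fderiv ℝ ginv (σ s) w) (Icc c s₀) s := fun s hs =>
          ((hginvdiff (σ s) (hWint (hσW s hs))).hasFDerivAt.comp_hasDerivAt s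
            (hσd s)).hasDerivWithinAt
        have hbd : ∀ s ∈ Icc c s₀, ‖fderiv ℝ ginv (σ s) w‖ ≤ M₁ * L := by
          intro s hs
          calc ‖fderiv ℝ ginv (σ s) w‖ ≤ ‖fderiv ℝ ginv (σ s)‖ * ‖w‖ :=
                ContinuousLinearMap.le_opNorm _ w
            _ ≤ M₁ * L := by
                rw [hwn]
                exact mul_le_mul_of_nonneg_right (hM₁b _ (hWD' (hσW s hs))) hLnn
        have h := (convex_Icc c s₀).norm_image_sub_le_of_norm_hasDerivWithin_le hder hbd
          (left_mem_Icc.mpr hcs₀.le) (right_mem_Icc.mpr hcs₀.le)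
        calc ‖ginv (σ s₀) - ginv (σ c)‖ ≤ M₁ * L * ‖s₀ - c‖ := h
          _ = M₁ * L * (s₀ - c) := by
              rw [Real.norm_eq_abs, abs_of_nonneg (by linarith)]
      have hginvσc : ginv (σ c) = u := by rw [← hgu]; exact hli u huD
      have hs₀E : s₀ ∈ E := by
        refine ⟨⟨le_trans hcIcc.1 hcs₀.le, min_le_left _ _⟩, ginv (σ s₀), ?_, ?_⟩
        · rw [mem_closedBall, dist_eq_norm]
          have htri : ‖ginv (σ s₀) - a‖ ≤ ‖ginv (σ s₀) - ginv (σ c)‖ + ‖ginv (σ c) - a‖ :=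
            norm_sub_le_norm_sub_add_norm_sub _ _ _
          have h2 : ‖ginv (σ c) - a‖ ≤ M₁ * L * c := by
            rw [hginvσc, ← dist_eq_norm]
            rwa [mem_closedBall] at hucb
          calc ‖ginv (σ s₀) - a‖ ≤ M₁ * L * (s₀ - c) + M₁ * L * c := by
                linarith [htri, hmvt, h2]
            _ = M₁ * L * s₀ := by ring
        · exact hri (σ s₀) (hWD' (hσW s₀ (right_mem_Icc.mpr hcs₀.le)))
      have := le_csSup hEbdd hs₀E
      rw [← hc] at this
      linarith
    have h1E : (1:ℝ) ∈ E := hc1 ▸ hcE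
    obtain ⟨-, u, hucb, hgu⟩ := h1E
    refine ⟨u, by simpa using hucb, ?_⟩
    rw [hgu]
    simp [hσ, hw]
  -- main assembly
  have hSne : (g '' K).Nonempty := hKne.image g
  have hScp : IsCompact (g '' K) := hKcp.image_of_continuousOn (hg.continuousOn.mono hKD)
  obtain ⟨y₀, hy₀S, hy₀d⟩ := hScp.exists_infDist_eq_dist hSne q
  have hd1 : Metric.infDist q (g '' K) < δ / 2 * M₁⁻¹ := (lt_min_iff.mp hq).1
  have hd2 : Metric.infDist q (g '' K) < M₁⁻¹ ^ 2 * M₂⁻¹ := (lt_min_iff.mp hq).2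
  have hdnn : 0 ≤ Metric.infDist q (g '' K) := Metric.infDist_nonneg
  set dq : ℝ := Metric.infDist q (g '' K) with hdq
  have pair : ∀ y₁, (y₁ ∈ g '' K ∧ dist q y₁ = dq) →
      ∀ y₂, (y₂ ∈ g '' K ∧ dist q y₂ = dq) → y₁ = y₂ := by
    rintro y₁ ⟨⟨a₁, ha₁, rfl⟩, hdy₁⟩ y₂ ⟨⟨a₂, ha₂, rfl⟩, hdy₂⟩
    by_contra hne
    set L : ℝ := dist (g a₂) (g a₁) with hLd
    have hLpos : 0 < L := dist_pos.mpr (fun h => hne h.symm)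
    have hL2d : L ≤ 2 * dq := by
      have h := dist_triangle (g a₂) q (g a₁)
      rw [dist_comm (g a₂) q] at h
      linarith [h, hdy₁, hdy₂]
    have hMLδ : M₁ * L < δ := by
      have h1 : M₁ * L ≤ M₁ * (2 * dq) := mul_le_mul_of_nonneg_left hL2d hM₁.le
      have h2 : M₁ * (2 * dq) < M₁ * (2 * (δ / 2 * M₁⁻¹)) := by
        apply mul_lt_mul_of_pos_left _ hM₁
        linarith
      have h3 : M₁ * (2 * (δ / 2 * M₁⁻¹)) = δ := by
        rw [show M₁ * (2 * (δ / 2 * M₁⁻¹)) = (M₁ * M₁⁻¹) * δ by ring,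
          mul_inv_cancel₀ hM₁.ne', one_mul]
      linarith
    obtain ⟨u, hucb, hgu⟩ := lift a₁ ha₁ (g a₂) hMLδ
    have huD : u ∈ D := by
      apply hballD a₁ ha₁
      exact closedBall_subset_ball hMLδ hucb
    have hua₂ : u = a₂ := by
      have h1 : ginv (g u) = u := hli u huD
      have h2 : ginv (g a₂) = a₂ := hli a₂ (hKD ha₂)
      rw [hgu] at h1
      rw [← h1, h2]
    have hvL : ‖a₂ - a₁‖ ≤ M₁ * L := by
      rw [mem_closedBall, dist_eq_norm] at hucb
      rwa [hua₂] at hucb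
    have hmin₁ : ∀ p ∈ K, dist q (g a₁) ≤ dist q (g p) := by
      intro p hp
      rw [hdy₁]
      exact Metric.infDist_le_dist_of_mem (mem_image_of_mem g hp)
    have hmin₂ : ∀ p ∈ K, dist q (g a₂) ≤ dist q (g p) := by
      intro p hp
      rw [hdy₂]
      exact Metric.infDist_le_dist_of_mem (mem_image_of_mem g hp)
    have k1 := keyC a₁ ha₁ a₂ ha₂ hmin₁
    have k2 := keyC a₂ ha₂ a₁ ha₁ hmin₂
    rw [hdy₁] at k1
    rw [hdy₂] at k2
    have hsum : ⟪q - g a₁, g a₂ - g a₁⟫ + ⟪q - g a₂, g a₁ - g a₂⟫ = L ^ 2 := by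
      have hneg : g a₁ - g a₂ = -(g a₂ - g a₁) := by abel
      rw [hneg, inner_neg_right, ← sub_eq_add_neg, ← inner_sub_left]
      have harg : q - g a₁ - (q - g a₂) = g a₂ - g a₁ := by abel
      rw [harg, real_inner_self_eq_norm_sq, hLd, dist_eq_norm]
    have hnorm12 : ‖a₁ - a₂‖ = ‖a₂ - a₁‖ := norm_sub_rev _ _
    rw [hnorm12] at k2
    have hvsq : ‖a₂ - a₁‖ ^ 2 ≤ (M₁ * L) ^ 2 := pow_le_pow_left₀ (norm_nonneg _) hvL 2
    have hfac : dq * M₂ * M₁ ^ 2 < 1 := by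
      have h1 : dq * M₂ * M₁ ^ 2 < (M₁⁻¹ ^ 2 * M₂⁻¹) * M₂ * M₁ ^ 2 := by
        apply mul_lt_mul_of_pos_right _ (pow_pos hM₁ 2)
        exact mul_lt_mul_of_pos_right hd2 hM₂
      have h2 : (M₁⁻¹ ^ 2 * M₂⁻¹) * M₂ * M₁ ^ 2 = 1 := by
        rw [show (M₁⁻¹ ^ 2 * M₂⁻¹) * M₂ * M₁ ^ 2 = (M₁ * M₁⁻¹) ^ 2 * (M₂ * M₂⁻¹) by ring,
          mul_inv_cancel₀ hM₁.ne', mul_inv_cancel₀ hM₂.ne']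
        norm_num
      linarith
    have h4 : dq * M₂ * ‖a₂ - a₁‖ ^ 2 ≤ dq * M₂ * (M₁ * L) ^ 2 :=
      mul_le_mul_of_nonneg_left hvsq (mul_nonneg hdnn hM₂.le)
    have h5 : dq * M₂ * M₁ ^ 2 * (L * L) < 1 * (L * L) :=
      mul_lt_mul_of_pos_right hfac (mul_pos hLpos hLpos)
    have h6 : dq * M₂ * (M₁ * L) ^ 2 = dq * M₂ * M₁ ^ 2 * (L * L) := by ring
    have h7 : L ^ 2 = L * L := by ring
    linarith [k1, k2, hsum, h4, h5, h6, h7]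
  refine ⟨y₀, ⟨hy₀S, hy₀d.symm⟩, ?_⟩
  intro y hy
  exact pair y ⟨hy.1, hy.2⟩ y₀ ⟨hy₀S, hy₀d.symm⟩
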